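/- (Generalized von Neumann trace inequality) For linear operators A, B, C, ..., G on ℂ^d, the maximum over unitaries U, V, W, ..., Z of |tr(A U B V C W ⋯ G Z)| equals Σ_j σ_j(A)σ_j(B)σ_j(C)⋯σ_j(G), where σ_j(X) are the decreasingly ordered singular values of X. -/

import Mathlib

open scoped ComplexOrder Matrix

noncomputable def sortedDesc {d : ℕ} (v : Fin d → ℝ) : Fin d → ℝ :=
  fun i => (v ∘ Tuple.sort v) (Fin.rev i)

/-- The decreasingly ordered singular values of a matrix: the eigenvalues of √(AAᴴ). -/
noncomputable def singVals {d : ℕ} (A : Matrix (Fin d) (Fin d) ℂ) : Fin d → ℝ :=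
  sortedDesc fun i =>
    Real.sqrt ((Matrix.posSemidef_self_mul_conjTranspose A).1.eigenvalues i)

namespace VN

open Matrix Finset
open scoped Matrix.Norms.L2Operator

variable {d : ℕ}



lemma singVals_nonneg (A : Matrix (Fin d) (Fin d) ℂ) (j : Fin d) : 0 ≤ singVals A j :=
  Real.sqrt_nonneg _

lemma singVals_antitone (A : Matrix (Fin d) (Fin d) ℂ) : Antitone (singVals A) := by
  intro i j hij
  unfold singVals sortedDesc
  exact Tuple.monotone_sort _ (Fin.rev_le_rev.mpr hij)

lemma chain_prod (m : ℕ) (P X : ℕ → Matrix (Fin d) (Fin d) ℂ)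
    (hP : ∀ n, P n ∈ Matrix.unitaryGroup (Fin d) ℂ) :
    (List.ofFn (fun i : Fin m => P i * X i * (P (i + 1 : ℕ))ᴴ)).prod
      = P 0 * (List.ofFn (fun i : Fin m => X i)).prod * (P m)ᴴ := by
  induction m generalizing P X with
  | zero =>
      simp only [List.ofFn_zero, List.prod_nil, mul_one]
      rw [← Matrix.star_eq_conjTranspose, ← Matrix.mem_unitaryGroup_iff.mp (hP 0)]
  | succ m ih =>
      rw [List.ofFn_succ, List.ofFn_succ, List.prod_cons, List.prod_cons]
      have := ih (fun n => P (n + 1)) (fun n => X (n + 1)) (fun n => hP (n + 1))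
      simp only [Fin.val_succ] at this ⊢
      rw [this]
      have h1 : (P 1)ᴴ * P 1 = 1 := by
        rw [← Matrix.star_eq_conjTranspose]
        exact Matrix.mem_unitaryGroup_iff'.mp (hP 1)
      simp only [Fin.val_zero, zero_add]
      calc P 0 * X 0 * (P 1)ᴴ * (P 1 * (List.ofFn fun i : Fin m => X (i + 1)).prod * (P (m + 1))ᴴ)
          = P 0 * X 0 * ((P 1)ᴴ * P 1) * ((List.ofFn fun i : Fin m => X (i + 1)).prod * (P (m + 1))ᴴ) := by
            noncomm_ring
        _ = P 0 * (X 0 * (List.ofFn fun i : Fin m => X (i + 1)).prod) * (P (m + 1))ᴴ := by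
            rw [h1]; noncomm_ring

lemma prod_ofFn_diagonal {m : ℕ} (v : Fin m → Fin d → ℂ) :
    (List.ofFn (fun i : Fin m => Matrix.diagonal (v i))).prod
      = Matrix.diagonal (fun j => ∏ i, v i j) := by
  induction m with
  | zero => simp [Matrix.diagonal_one]
  | succ m ih =>
      rw [List.ofFn_succ, List.prod_cons, ih (fun i => v i.succ), Matrix.diagonal_mul_diagonal]
      exact congrArg Matrix.diagonal (funext fun j => (Fin.prod_univ_succ (fun i => v i j)).symm)

lemma prod_ofFn_sum {m : ℕ} (c : Fin m → Fin d → ℂ) (T : Fin m → Fin d → Matrix (Fin d) (Fin d) ℂ) :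
    (List.ofFn (fun i : Fin m => ∑ k, c i k • T i k)).prod
      = ∑ g : Fin m → Fin d, (∏ i, c i (g i)) • (List.ofFn (fun i : Fin m => T i (g i))).prod := by
  induction m with
  | zero =>
      rw [List.ofFn_zero, List.prod_nil]
      rw [Fintype.sum_unique (fun g : Fin 0 → Fin d => (∏ i, c i (g i)) • (List.ofFn (fun i : Fin 0 => T i (g i))).prod)]
      simp
  | succ m ih =>
      rw [List.ofFn_succ, List.prod_cons, ih (fun i => c i.succ) (fun i k => T i.succ k)]
      rw [Finset.sum_mul_sum]
      rw [← (Fin.consEquiv (fun _ : Fin (m+1) => Fin d)).sum_comp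
        (fun g => (∏ i, c i (g i)) • (List.ofFn (fun i : Fin (m+1) => T i (g i))).prod)]
      rw [Fintype.sum_prod_type]
      refine Finset.sum_congr rfl fun k _ => Finset.sum_congr rfl fun g _ => ?_
      have hcons : (Fin.consEquiv (fun _ : Fin (m+1) => Fin d)) (k, g)
          = Fin.cons k g := rfl
      rw [hcons]
      rw [List.ofFn_succ, List.prod_cons, Fin.prod_univ_succ]
      simp only [Fin.cons_zero, Fin.cons_succ]
      rw [smul_mul_smul_comm]

lemma norm_one_le : ‖(1 : Matrix (Fin d) (Fin d) ℂ)‖ ≤ 1 := by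
  rw [Matrix.cstar_norm_def, _root_.map_one]
  exact ContinuousLinearMap.norm_id_le

lemma norm_unitary_le {V : Matrix (Fin d) (Fin d) ℂ} (hV : V ∈ Matrix.unitaryGroup (Fin d) ℂ) :
    ‖V‖ ≤ 1 := by
  have h1 : Vᴴ * V = 1 := Matrix.mem_unitaryGroup_iff'.mp hV
  have h2 := Matrix.l2_opNorm_conjTranspose_mul_self V
  rw [h1] at h2
  have := norm_one_le (d := d)
  nlinarith [norm_nonneg V]

/-- projection onto first k+1 coordinates -/
noncomputable def proj (k : Fin d) : Matrix (Fin d) (Fin d) ℂ :=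
  Matrix.diagonal (fun j => if j ≤ k then (1 : ℂ) else 0)

lemma proj_conjTranspose_mul_self (k : Fin d) : (proj k)ᴴ * proj k = proj k := by
  unfold proj
  rw [Matrix.diagonal_conjTranspose, Matrix.diagonal_mul_diagonal]
  refine congrArg Matrix.diagonal (funext fun j => ?_)
  by_cases h : j ≤ k <;> simp [h, Pi.star_apply]

lemma norm_proj_le (k : Fin d) : ‖proj k‖ ≤ 1 := by
  have h2 := Matrix.l2_opNorm_conjTranspose_mul_self (proj k)
  rw [proj_conjTranspose_mul_self] at h2
  nlinarith [norm_nonneg (proj k)]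

lemma euclid_apply_le (x : EuclideanSpace ℂ (Fin d)) (i : Fin d) : ‖x i‖ ≤ ‖x‖ := by
  rw [EuclideanSpace.norm_eq]
  have h : ‖x i‖^2 ≤ ∑ j, ‖x j‖^2 :=
    Finset.single_le_sum (f := fun j => ‖x j‖^2) (fun _ _ => sq_nonneg _) (Finset.mem_univ i)
  calc ‖x i‖ = Real.sqrt (‖x i‖^2) := (Real.sqrt_sq (norm_nonneg _)).symm
    _ ≤ _ := Real.sqrt_le_sqrt h

lemma abs_entry_le_norm (Z : Matrix (Fin d) (Fin d) ℂ) (i j : Fin d) :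
    ‖Z i j‖ ≤ ‖Z‖ := by
  have h := Matrix.l2_opNorm_mulVec Z (EuclideanSpace.single j (1 : ℂ))
  rw [EuclideanSpace.norm_single, norm_one, mul_one] at h
  refine le_trans ?_ h
  have hv : (EuclideanSpace.equiv (Fin d) ℂ).symm (Z *ᵥ (EuclideanSpace.single j (1:ℂ))) i
      = Z i j := by
    simp [Matrix.mulVec, dotProduct, EuclideanSpace.single_apply]
  rw [← hv]
  exact euclid_apply_le _ i

lemma norm_list_prod_le_one (L : List (Matrix (Fin d) (Fin d) ℂ))
    (h : ∀ X ∈ L, ‖X‖ ≤ 1) : ‖L.prod‖ ≤ 1 := by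
  induction L with
  | nil => simpa using norm_one_le
  | cons X L ih =>
      rw [List.prod_cons]
      calc ‖X * L.prod‖ ≤ ‖X‖ * ‖L.prod‖ := Matrix.l2_opNorm_mul X L.prod
        _ ≤ 1 * 1 := by
            have := ih (fun Y hY => h Y (List.mem_cons_of_mem X hY))
            have hX := h X List.mem_cons_self
            exact mul_le_mul hX this (norm_nonneg _) zero_le_one
        _ = 1 := mul_one 1


noncomputable def cdiff {d : ℕ} (σ : Fin d → ℝ) : ℕ → ℝ := fun n =>
  (if h : n < d then σ ⟨n, h⟩ else 0) - (if h : n + 1 < d then σ ⟨n + 1, h⟩ else 0)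

lemma cdiff_nonneg {σ : Fin d → ℝ} (hanti : Antitone σ) (hnn : ∀ j, 0 ≤ σ j) (n : ℕ) :
    0 ≤ cdiff σ n := by
  unfold cdiff
  by_cases h1 : n + 1 < d
  · have h0 : n < d := Nat.lt_of_succ_lt h1
    rw [dif_pos h0, dif_pos h1, sub_nonneg]
    exact hanti (by exact_mod_cast Nat.le_succ n)
  · rw [dif_neg h1, sub_zero]
    by_cases h0 : n < d
    · rw [dif_pos h0]; exact hnn _
    · rw [dif_neg h0]

lemma sum_cdiff {σ : Fin d → ℝ} (j : Fin d) :
    σ j = ∑ k : Fin d, cdiff σ k * (if j ≤ k then 1 else 0) := by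
  set f : ℕ → ℝ := fun n => if h : n < d then σ ⟨n, h⟩ else 0 with hf
  have hstep : ∀ k : Fin d, cdiff σ (k : ℕ) * (if j ≤ k then 1 else 0)
      = if (j : ℕ) ≤ (k : ℕ) then f k - f (k + 1) else 0 := by
    intro k
    by_cases h : j ≤ k
    · rw [if_pos h, if_pos (Fin.le_def.mp h), mul_one]; rfl
    · rw [if_neg h, if_neg (fun hc => h (Fin.le_def.mpr hc)), mul_zero]
  rw [Finset.sum_congr rfl fun k _ => hstep k]
  rw [Fin.sum_univ_eq_sum_range (fun n => if (j:ℕ) ≤ n then f n - f (n+1) else 0) d]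
  rw [← Finset.sum_filter]
  have hfil : (Finset.range d).filter (fun n => (j:ℕ) ≤ n) = Finset.Ico (j:ℕ) d := by
    ext n
    simp [Finset.mem_filter, Finset.mem_range, Finset.mem_Ico, and_comm]
  rw [hfil]
  rw [Finset.sum_Ico_eq_sub (fun n => f n - f (n+1)) (le_of_lt j.isLt)]
  rw [Finset.sum_range_sub' f, Finset.sum_range_sub' f]
  have hd : f d = 0 := dif_neg (lt_irrefl d)
  have hj : f (j : ℕ) = σ j := by
    rw [hf]; simp only [dif_pos j.isLt, Fin.eta]
  rw [hd, hj]
  ring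

lemma diag_decomp {σ : Fin d → ℝ} :
    Matrix.diagonal (fun j => (σ j : ℂ))
      = ∑ k : Fin d, (cdiff σ (k : ℕ) : ℂ) • proj k := by
  ext j l
  rw [Matrix.sum_apply]
  by_cases hjl : j = l
  · subst hjl
    rw [Matrix.diagonal_apply_eq]
    have : ∀ k : Fin d, ((cdiff σ (k:ℕ) : ℂ) • proj k) j j
        = (cdiff σ (k:ℕ) : ℂ) * (if j ≤ k then 1 else 0) := by
      intro k
      rw [Matrix.smul_apply, proj, Matrix.diagonal_apply_eq, smul_eq_mul]
    rw [Finset.sum_congr rfl fun k _ => this k]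
    have hr := sum_cdiff (σ := σ) j
    have hc : ((σ j : ℝ) : ℂ)
        = ((∑ k : Fin d, cdiff σ (k:ℕ) * (if j ≤ k then 1 else 0) : ℝ) : ℂ) := by
      exact_mod_cast congrArg Complex.ofReal hr
    rw [hc]
    push_cast
    refine Finset.sum_congr rfl fun k _ => ?_
    by_cases h : j ≤ k <;> simp [h]
  · rw [Matrix.diagonal_apply_ne _ hjl]
    rw [Finset.sum_eq_zero fun k _ => ?_]
    rw [Matrix.smul_apply, proj, Matrix.diagonal_apply_ne _ hjl, smul_zero]



lemma trace_proj_prod_bound {m : ℕ} (g : Fin m → Fin d) (V : Fin m → Matrix (Fin d) (Fin d) ℂ)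
    (hV : ∀ i, V i ∈ Matrix.unitaryGroup (Fin d) ℂ) :
    ‖Matrix.trace (List.ofFn (fun i => proj (g i) * V i)).prod‖
      ≤ ∑ j, ∏ i, (if j ≤ g i then (1:ℝ) else 0) := by
  cases m with
  | zero =>
      simp [Matrix.trace_one]
  | succ m =>
      obtain ⟨i0, -, hi0⟩ := Finset.exists_min_image Finset.univ g univ_nonempty
      set L := List.ofFn (fun i : Fin (m+1) => proj (g i) * V i) with hL
      have hlen : (i0 : ℕ) < L.length := by simp [hL, i0.isLt]
      have hmemle : ∀ X ∈ L, ‖X‖ ≤ 1 := by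
        intro X hX
        rw [hL, List.mem_ofFn] at hX
        obtain ⟨i, rfl⟩ := hX
        calc ‖proj (g i) * V i‖ ≤ ‖proj (g i)‖ * ‖V i‖ := Matrix.l2_opNorm_mul _ _
          _ ≤ 1 * 1 := mul_le_mul (norm_proj_le _) (norm_unitary_le (hV i)) (norm_nonneg _)
              zero_le_one
          _ = 1 := mul_one 1
      have h1 : L.prod = (L.take i0).prod * (L.drop i0).prod := by
        rw [← List.prod_append, List.take_append_drop]
      have h2 : L.drop (i0 : ℕ) = (proj (g i0) * V i0) :: L.drop ((i0 : ℕ) + 1) := by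
        rw [List.drop_eq_getElem_cons hlen]
        congr 1
        have h3 := List.getElem_ofFn (f := fun i : Fin (m+1) => proj (g i) * V i) (i := (i0 : ℕ))
          (by simp only [List.length_ofFn]; exact i0.isLt)
        simp only [Fin.eta] at h3
        exact h3
      set Z : Matrix (Fin d) (Fin d) ℂ := V i0 * ((L.drop ((i0:ℕ)+1)).prod * (L.take i0).prod)
        with hZ
      have htr : Matrix.trace L.prod = Matrix.trace (proj (g i0) * Z) := by
        rw [h1, Matrix.trace_mul_comm, h2, List.prod_cons, hZ]
        ring_nf
        rw [Matrix.mul_assoc, Matrix.mul_assoc]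
      have hZnorm : ‖Z‖ ≤ 1 := by
        calc ‖Z‖ ≤ ‖V i0‖ * ‖(L.drop ((i0:ℕ)+1)).prod * (L.take i0).prod‖ :=
              Matrix.l2_opNorm_mul _ _
          _ ≤ 1 * (1 * 1) := by
              refine mul_le_mul (norm_unitary_le (hV i0)) ?_ (norm_nonneg _) zero_le_one
              calc ‖(L.drop ((i0:ℕ)+1)).prod * (L.take i0).prod‖
                  ≤ ‖(L.drop ((i0:ℕ)+1)).prod‖ * ‖(L.take i0).prod‖ := Matrix.l2_opNorm_mul _ _
                _ ≤ 1 * 1 := mul_le_mul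
                    (norm_list_prod_le_one _ (fun X hX => hmemle X (List.drop_subset _ _ hX)))
                    (norm_list_prod_le_one _ (fun X hX => hmemle X (List.take_subset _ _ hX)))
                    (norm_nonneg _) zero_le_one
          _ = 1 := by ring
      rw [htr]
      have htrsum : Matrix.trace (proj (g i0) * Z)
          = ∑ j, (if j ≤ g i0 then (1:ℂ) else 0) * Z j j := by
        rw [Matrix.trace]
        refine Finset.sum_congr rfl fun j _ => ?_
        rw [Matrix.diag]
        rw [proj, Matrix.diagonal_mul]
      rw [htrsum]
      calc ‖∑ j, (if j ≤ g i0 then (1:ℂ) else 0) * Z j j‖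
          ≤ ∑ j, ‖(if j ≤ g i0 then (1:ℂ) else 0) * Z j j‖ := by
            exact norm_sum_le _ _
        _ ≤ ∑ j, ∏ i, (if j ≤ g i then (1:ℝ) else 0) := by
            refine Finset.sum_le_sum fun j _ => ?_
            by_cases hj : j ≤ g i0
            · have hall : ∀ i, j ≤ g i := fun i => le_trans hj (hi0 i (Finset.mem_univ i))
              rw [if_pos hj, one_mul]
              rw [Finset.prod_eq_one (fun i _ => if_pos (hall i))]
              exact le_trans (abs_entry_le_norm Z j j) hZnorm
            · rw [if_neg hj, zero_mul, norm_zero]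
              exact Finset.prod_nonneg fun i _ => by positivity




lemma core {m : ℕ} (σ : Fin m → Fin d → ℝ) (hnn : ∀ i j, 0 ≤ σ i j)
    (hanti : ∀ i, Antitone (σ i)) (V : Fin m → Matrix (Fin d) (Fin d) ℂ)
    (hV : ∀ i, V i ∈ Matrix.unitaryGroup (Fin d) ℂ) :
    ‖Matrix.trace
        (List.ofFn (fun i => Matrix.diagonal (fun j => (σ i j : ℂ)) * V i)).prod‖
      ≤ ∑ j, ∏ i, σ i j := by
  set c : Fin m → ℕ → ℝ := fun i => cdiff (σ i) with hc
  have hcnn : ∀ i n, 0 ≤ c i n := fun i n => cdiff_nonneg (hanti i) (hnn i) n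
  -- rewrite each factor
  have hfac : (fun i : Fin m => Matrix.diagonal (fun j => (σ i j : ℂ)) * V i)
      = fun i : Fin m => ∑ k : Fin d, (c i (k:ℕ) : ℂ) • (proj k * V i) := by
    funext i
    rw [diag_decomp, Finset.sum_mul]
    exact Finset.sum_congr rfl fun k _ => smul_mul_assoc _ _ _
  rw [hfac, prod_ofFn_sum (fun i k => (c i (k:ℕ) : ℂ)) (fun i k => proj k * V i)]
  rw [Matrix.trace_sum]
  have habs : ∀ g : Fin m → Fin d,
      ‖Matrix.trace ((∏ i, (c i ((g i):ℕ) : ℂ))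
          • (List.ofFn (fun i : Fin m => proj (g i) * V i)).prod)‖
        ≤ (∏ i, c i ((g i):ℕ)) * ∑ j, ∏ i, (if j ≤ g i then (1:ℝ) else 0) := by
    intro g
    rw [Matrix.trace_smul, smul_eq_mul, norm_mul]
    have h1 : ‖∏ i, (c i ((g i):ℕ) : ℂ)‖ = ∏ i, c i ((g i):ℕ) := by
      rw [show (∏ i, (c i ((g i):ℕ) : ℂ)) = ((∏ i, c i ((g i):ℕ) : ℝ) : ℂ) by push_cast; rfl]
      rw [Complex.norm_of_nonneg (Finset.prod_nonneg fun i _ => hcnn _ _)]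
    rw [h1]
    exact mul_le_mul_of_nonneg_left (trace_proj_prod_bound g V hV)
      (Finset.prod_nonneg fun i _ => hcnn _ _)
  calc ‖∑ g : Fin m → Fin d, Matrix.trace ((∏ i, (c i ((g i):ℕ) : ℂ))
          • (List.ofFn (fun i : Fin m => proj (g i) * V i)).prod)‖
      ≤ ∑ g : Fin m → Fin d, ‖Matrix.trace ((∏ i, (c i ((g i):ℕ) : ℂ))
          • (List.ofFn (fun i : Fin m => proj (g i) * V i)).prod)‖ := norm_sum_le _ _
    _ ≤ ∑ g : Fin m → Fin d, (∏ i, c i ((g i):ℕ)) * ∑ j, ∏ i, (if j ≤ g i then (1:ℝ) else 0) :=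
        Finset.sum_le_sum fun g _ => habs g
    _ = ∑ j, ∏ i, σ i j := by
        rw [Finset.sum_congr rfl (fun (g : Fin m → Fin d) _ => Finset.mul_sum _ _ _)]
        rw [Finset.sum_comm]
        refine Finset.sum_congr rfl fun j _ => ?_
        rw [Finset.sum_congr rfl (fun (g : Fin m → Fin d) _ =>
          (Finset.prod_mul_distrib (s := Finset.univ)
            (f := fun i => c i ((g i):ℕ)) (g := fun i => if j ≤ g i then (1:ℝ) else 0)).symm)]
        rw [← Fintype.piFinset_univ,
          ← Finset.prod_univ_sum (fun _ : Fin m => (Finset.univ : Finset (Fin d)))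
            (fun i k => c i (k:ℕ) * (if j ≤ k then (1:ℝ) else 0))]
        exact Finset.prod_congr rfl fun i _ => (sum_cdiff j).symm




lemma svd_exists (A : Matrix (Fin d) (Fin d) ℂ) :
    ∃ P Q : Matrix (Fin d) (Fin d) ℂ, P ∈ Matrix.unitaryGroup (Fin d) ℂ ∧
    Q ∈ Matrix.unitaryGroup (Fin d) ℂ ∧
    A = P * Matrix.diagonal (fun j => (singVals A j : ℂ)) * Q := by
  classical
  have hAA := Matrix.posSemidef_self_mul_conjTranspose A
  set h : (A * Aᴴ).IsHermitian := hAA.1 with hh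
  set lam : Fin d → ℝ := h.eigenvalues with hlam
  have hlam_nn : ∀ i, 0 ≤ lam i := fun i => hAA.eigenvalues_nonneg i
  set v : Fin d → ℝ := fun i => Real.sqrt (lam i) with hv
  set ρ : Equiv.Perm (Fin d) := Fin.revPerm.trans (Tuple.sort v) with hρ
  set σ : Fin d → ℝ := singVals A with hσdef
  have hσ : ∀ j, σ j = v (ρ j) := fun j => rfl
  have hσ_nn : ∀ j, 0 ≤ σ j := fun j => by rw [hσ]; exact Real.sqrt_nonneg _
  have hσ2 : ∀ j, (σ j : ℂ) * (σ j : ℂ) = ((lam (ρ j) : ℝ) : ℂ) := by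
    intro j
    rw [hσ]
    norm_cast
    exact Real.mul_self_sqrt (hlam_nn _)
  set W0 : Matrix (Fin d) (Fin d) ℂ := (h.eigenvectorUnitary : Matrix (Fin d) (Fin d) ℂ) with hW0
  have hW0u : W0 ∈ Matrix.unitaryGroup (Fin d) ℂ := (h.eigenvectorUnitary).2
  have spec : A * Aᴴ = W0 * Matrix.diagonal (RCLike.ofReal ∘ lam) * W0ᴴ := by
    have := h.spectral_theorem; rw [Unitary.conjStarAlgAut_apply, Matrix.star_eq_conjTranspose] at this; exact this
  set W : Matrix (Fin d) (Fin d) ℂ := W0.submatrix id ⇑ρ with hW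
  have hWu : W ∈ Matrix.unitaryGroup (Fin d) ℂ := by
    rw [Matrix.mem_unitaryGroup_iff']
    rw [Matrix.star_eq_conjTranspose, hW, Matrix.conjTranspose_submatrix]
    have heq : W0ᴴ.submatrix ⇑ρ id * W0.submatrix id ⇑ρ = (W0ᴴ * W0).submatrix ⇑ρ ⇑ρ := by
      simpa using Matrix.submatrix_mul_equiv W0ᴴ W0 ⇑ρ (Equiv.refl _) ⇑ρ
    rw [heq, ← Matrix.star_eq_conjTranspose, Matrix.mem_unitaryGroup_iff'.mp hW0u]
    exact Matrix.submatrix_one_equiv ρ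
  have spec2 : A * Aᴴ = W * Matrix.diagonal (fun j => ((lam (ρ j) : ℝ) : ℂ)) * Wᴴ := by
    rw [hW, Matrix.conjTranspose_submatrix]
    have hd : Matrix.diagonal (fun j => ((lam (ρ j) : ℝ) : ℂ))
        = (Matrix.diagonal (RCLike.ofReal ∘ lam)).submatrix ⇑ρ ⇑ρ := by
      rw [Matrix.submatrix_diagonal_equiv]
      rfl
    rw [hd, Matrix.submatrix_mul_equiv W0 _ id ρ ⇑ρ,
      Matrix.submatrix_mul_equiv _ (W0ᴴ) id ρ id, spec]
    rfl
  -- M = Wᴴ A has rows with norms σ and orthogonal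
  set M : Matrix (Fin d) (Fin d) ℂ := Wᴴ * A with hM
  have hMM : M * Mᴴ = Matrix.diagonal (fun j => ((lam (ρ j) : ℝ) : ℂ)) := by
    rw [hM, Matrix.conjTranspose_mul, Matrix.conjTranspose_conjTranspose]
    calc Wᴴ * A * (Aᴴ * W) = Wᴴ * (A * Aᴴ) * W := by noncomm_ring
      _ = (Wᴴ * W) * Matrix.diagonal (fun j => ((lam (ρ j) : ℝ) : ℂ)) * (Wᴴ * W) := by
          rw [spec2]; noncomm_ring
      _ = _ := by
          rw [← Matrix.star_eq_conjTranspose, Matrix.mem_unitaryGroup_iff'.mp hWu,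
            Matrix.one_mul, Matrix.mul_one]
  -- rows as Euclidean vectors
  set r : Fin d → EuclideanSpace ℂ (Fin d) := fun j => (WithLp.equiv 2 _).symm (M j) with hr
  have hinner : ∀ j k, inner ℂ (r j) (r k) = if j = k then ((lam (ρ j) : ℝ) : ℂ) else 0 := by
    intro j k
    rw [PiLp.inner_apply]
    have : ∀ l, inner ℂ (r j l) (r k l) = (starRingEnd ℂ) (M j l) * M k l := fun l => RCLike.inner_apply' _ _
    simp_rw [this]
    have : (M * Mᴴ) k j = ∑ l, (starRingEnd ℂ) (M j l) * M k l := by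
      rw [Matrix.mul_apply]
      refine Finset.sum_congr rfl fun l _ => ?_
      rw [Matrix.conjTranspose_apply, mul_comm]
      rfl
    rw [← this, hMM]
    by_cases hjk : j = k
    · subst hjk; simp [Matrix.diagonal_apply_eq]
    · rw [Matrix.diagonal_apply_ne' _ hjk, if_neg hjk]
  -- orthonormal family on the support
  set s : Set (Fin d) := {j | σ j ≠ 0} with hs
  set u : Fin d → EuclideanSpace ℂ (Fin d) := fun j => ((σ j : ℂ))⁻¹ • r j with hu
  have hON : Orthonormal ℂ (s.restrict u) := by
    rw [orthonormal_iff_ite]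
    intro i j
    have hi : σ (i : Fin d) ≠ 0 := i.2
    have hj : σ (j : Fin d) ≠ 0 := j.2
    show inner ℂ (u i) (u j) = _
    rw [hu]
    simp only [inner_smul_left, inner_smul_right, map_inv₀, Complex.conj_ofReal]
    rw [hinner]
    by_cases hij : (i : Fin d) = (j : Fin d)
    · rw [if_pos hij, if_pos (Subtype.ext hij)]
      rw [← hij]
      rw [← hσ2 i]
      field_simp
    · rw [if_neg hij, if_neg (fun hc => hij (congrArg Subtype.val hc))]
      ring
  obtain ⟨b, hb⟩ := hON.exists_orthonormalBasis_extension_of_card_eq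
    (by simp [finrank_euclideanSpace])
  -- Q : rows are the basis vectors
  set Q : Matrix (Fin d) (Fin d) ℂ := Matrix.of (fun j k => b j k) with hQ
  have hQu : Q ∈ Matrix.unitaryGroup (Fin d) ℂ := by
    rw [Matrix.mem_unitaryGroup_iff]
    ext j k
    rw [Matrix.mul_apply, Matrix.one_apply]
    have : ∀ l, Q j l * (star Q) l k = (starRingEnd ℂ) (b k l) * b j l := by
      intro l
      rw [Matrix.star_apply, hQ]
      simp only [Matrix.of_apply, RingHom.coe_coe]
      ring_nf
      rfl
    simp_rw [this]
    have hbik := (orthonormal_iff_ite.mp b.orthonormal) k j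
    rw [PiLp.inner_apply] at hbik
    have : ∀ l, inner ℂ (b k l) (b j l) = (starRingEnd ℂ) (b k l) * b j l := fun l => RCLike.inner_apply' _ _
    simp_rw [this] at hbik
    rw [hbik]
    by_cases hjk : j = k
    · subst hjk; simp
    · rw [if_neg hjk, if_neg (fun hc => hjk hc.symm)]
  -- M = diag σ * Q
  have hMQ : M = Matrix.diagonal (fun j => (σ j : ℂ)) * Q := by
    ext j k
    rw [Matrix.diagonal_mul]
    by_cases hjz : σ j = 0
    · -- row j of M is zero
      have hrow : ∑ l, Complex.normSq (M j l) = 0 := by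
        have h0 : (M * Mᴴ) j j = 0 := by
          rw [hMM, Matrix.diagonal_apply_eq]
          have : lam (ρ j) = 0 := by
            have := hσ2 j
            rw [hjz] at this
            norm_cast at this
            simpa using this.symm
          rw [this]; norm_num
        rw [Matrix.mul_apply] at h0
        have : ∀ l, M j l * Mᴴ l j = (Complex.normSq (M j l) : ℂ) := by
          intro l
          rw [Matrix.conjTranspose_apply]
          exact Complex.mul_conj _
        rw [Finset.sum_congr rfl (fun l _ => this l)] at h0
        exact_mod_cast congrArg Complex.re (by exact_mod_cast h0 : ((∑ l, Complex.normSq (M j l) : ℝ) : ℂ) = 0)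
      have hzero : ∀ l, M j l = 0 := by
        intro l
        have := (Finset.sum_eq_zero_iff_of_nonneg (fun l _ => Complex.normSq_nonneg (M j l))).mp
          hrow l (Finset.mem_univ l)
        exact Complex.normSq_eq_zero.mp this
      rw [hzero k, hjz]
      norm_num
    · have hjs : j ∈ s := hjz
      have : Q j k = ((σ j : ℂ))⁻¹ * M j k := by
        rw [hQ]
        simp only [Matrix.of_apply]
        rw [hb j hjs, hu]
        rfl
      rw [this]
      field_simp
  refine ⟨W, Q, hWu, hQu, ?_⟩
  have : A = W * M := by
    rw [hM, ← Matrix.mul_assoc, ← Matrix.star_eq_conjTranspose,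
      Matrix.mem_unitaryGroup_iff.mp hWu, Matrix.one_mul]
  rw [this, hMQ, Matrix.mul_assoc, hσdef]

end VN

open VN in
/-- the generalized von Neumann trace inequality:
max over unitaries U, V, …, Z of |tr(A U B V ⋯ G Z)| = Σ_j σ_j(A)σ_j(B)⋯σ_j(G). -/




theorem generalized_vonNeumann_trace
    {d m : ℕ} (A : Fin m → Matrix (Fin d) (Fin d) ℂ) :
    IsGreatest {x : ℝ | ∃ U : Fin m → Matrix (Fin d) (Fin d) ℂ,
        (∀ i, U i ∈ Matrix.unitaryGroup (Fin d) ℂ) ∧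
        x = ‖Matrix.trace ((List.ofFn (fun i => A i * U i)).prod)‖}
      (∑ j, ∏ i, singVals (A i) j) := by
  classical
  obtain ⟨P, Q, hP, hQ, hA⟩ : ∃ P Q : Fin m → Matrix (Fin d) (Fin d) ℂ,
      (∀ i, P i ∈ Matrix.unitaryGroup (Fin d) ℂ) ∧
      (∀ i, Q i ∈ Matrix.unitaryGroup (Fin d) ℂ) ∧
      (∀ i, A i = P i * Matrix.diagonal (fun j => (singVals (A i) j : ℂ)) * Q i) := by
    choose P Q h1 h2 h3 using fun i => svd_exists (A i)
    exact ⟨P, Q, h1, h2, h3⟩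
  set D : Fin m → Matrix (Fin d) (Fin d) ℂ :=
    fun i => Matrix.diagonal (fun j => (singVals (A i) j : ℂ)) with hD
  set Pn : ℕ → Matrix (Fin d) (Fin d) ℂ :=
    fun n => if h : n % m < m then P ⟨n % m, h⟩ else 1 with hPn
  have hPnu : ∀ n, Pn n ∈ Matrix.unitaryGroup (Fin d) ℂ := by
    intro n
    simp only [hPn]
    by_cases h : n % m < m
    · rw [dif_pos h]; exact hP _
    · rw [dif_neg h]; exact Submonoid.one_mem _
  have hPn_lt : ∀ i : Fin m, Pn (i : ℕ) = P i := by
    intro i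
    simp only [hPn]
    simp only [Nat.mod_eq_of_lt i.isLt, dif_pos i.isLt, Fin.eta]
  have hPn_m : Pn m = Pn 0 := by
    simp only [hPn]
    simp only [Nat.mod_self, Nat.zero_mod]
    rfl
  have hPn0star : (Pn m)ᴴ * Pn 0 = 1 := by
    rw [hPn_m, ← Matrix.star_eq_conjTranspose]
    exact Matrix.mem_unitaryGroup_iff'.mp (hPnu 0)
  constructor
  · -- achieved
    refine ⟨fun i => (Q i)ᴴ * (Pn ((i : ℕ) + 1))ᴴ, ?_, ?_⟩
    · intro i
      exact Submonoid.mul_mem _ (Unitary.star_mem (hQ i)) (Unitary.star_mem (hPnu _))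
    · set X : ℕ → Matrix (Fin d) (Fin d) ℂ :=
        fun n => if h : n < m then D ⟨n, h⟩ else 1 with hX
      have hfun : (fun i : Fin m => A i * ((Q i)ᴴ * (Pn ((i : ℕ) + 1))ᴴ))
          = fun i : Fin m => Pn (i : ℕ) * X (i : ℕ) * (Pn ((i : ℕ) + 1))ᴴ := by
        funext i
        rw [hA i, hPn_lt i]
        simp only [hX]
        rw [dif_pos i.isLt, Fin.eta]
        have hQQ : Q i * (Q i)ᴴ = 1 := by
          rw [← Matrix.star_eq_conjTranspose]
          exact Matrix.mem_unitaryGroup_iff.mp (hQ i)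
        calc P i * D i * Q i * ((Q i)ᴴ * (Pn ((i:ℕ)+1))ᴴ)
            = P i * D i * (Q i * (Q i)ᴴ) * (Pn ((i:ℕ)+1))ᴴ := by noncomm_ring
          _ = P i * D i * (Pn ((i:ℕ)+1))ᴴ := by rw [hQQ, Matrix.mul_one]
      rw [hfun, chain_prod m Pn X hPnu]
      have hXD : (List.ofFn fun i : Fin m => X (i : ℕ))
          = List.ofFn fun i : Fin m => Matrix.diagonal (fun j => (singVals (A i) j : ℂ)) := by
        refine congrArg List.ofFn (funext fun i => ?_)
        simp only [hX]
        rw [dif_pos i.isLt, Fin.eta]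
      rw [hXD, prod_ofFn_diagonal]
      rw [Matrix.trace_mul_cycle, hPn0star, Matrix.one_mul]
      rw [Matrix.trace_diagonal]
      have : ∑ j, ∏ i, ((singVals (A i) j : ℝ) : ℂ) = ((∑ j, ∏ i, singVals (A i) j : ℝ) : ℂ) := by
        push_cast
        rfl
      rw [this, Complex.norm_of_nonneg]
      exact Finset.sum_nonneg fun j _ =>
        Finset.prod_nonneg fun i _ => singVals_nonneg (A i) j
  · -- upper bound
    rintro x ⟨U, hU, rfl⟩
    set V : Fin m → Matrix (Fin d) (Fin d) ℂ := fun i => Q i * U i * Pn ((i : ℕ) + 1) with hV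
    have hVu : ∀ i, V i ∈ Matrix.unitaryGroup (Fin d) ℂ := fun i =>
      Submonoid.mul_mem _ (Submonoid.mul_mem _ (hQ i) (hU i)) (hPnu _)
    set X : ℕ → Matrix (Fin d) (Fin d) ℂ :=
      fun n => if h : n < m then D ⟨n, h⟩ * V ⟨n, h⟩ else 1 with hX
    have hfun : (fun i : Fin m => A i * U i)
        = fun i : Fin m => Pn (i : ℕ) * X (i : ℕ) * (Pn ((i : ℕ) + 1))ᴴ := by
      funext i
      rw [hA i, hPn_lt i]
      simp only [hX]
      rw [dif_pos i.isLt, Fin.eta, hV]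
      have hPP : Pn ((i:ℕ)+1) * (Pn ((i:ℕ)+1))ᴴ = 1 := by
        rw [← Matrix.star_eq_conjTranspose]
        exact Matrix.mem_unitaryGroup_iff.mp (hPnu _)
      calc P i * D i * Q i * U i
          = P i * (D i * (Q i * U i * Pn ((i:ℕ)+1))) * (Pn ((i:ℕ)+1))ᴴ
            - P i * D i * Q i * U i * (Pn ((i:ℕ)+1) * (Pn ((i:ℕ)+1))ᴴ - 1) := by noncomm_ring
        _ = P i * (D i * (Q i * U i * Pn ((i:ℕ)+1))) * (Pn ((i:ℕ)+1))ᴴ := by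
            rw [hPP]; simp
    rw [hfun, chain_prod m Pn X hPnu]
    rw [Matrix.trace_mul_cycle, hPn0star, Matrix.one_mul]
    have hXDV : (List.ofFn fun i : Fin m => X (i : ℕ))
        = List.ofFn fun i : Fin m =>
            Matrix.diagonal (fun j => (singVals (A i) j : ℂ)) * V i := by
      refine congrArg List.ofFn (funext fun i => ?_)
      simp only [hX]
      rw [dif_pos i.isLt, Fin.eta]
    rw [hXDV]
    exact core (fun i => singVals (A i)) (fun i j => singVals_nonneg (A i) j)
      (fun i => singVals_antitone (A i)) V hVu
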